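/- Let ι be a finite index type and for each s ∈ ι let X_s be a finite-dimensional real inner product space; let X = Π_{s ∈ ι} X_s with inner product ⟨u, v⟩ = Σ_s ⟨u_s, v_s⟩. For each s let F_s : X_s → EReal never take the value −∞ and be finite at some point, and define F : X → EReal by F(u) = Σ_s F_s(u_s). Then for every u* ∈ X the Legendre–Fenchel conjugate F*(u*) := ⨆_{u ∈ X} (⟨u, u*⟩ − F(u)) satisfies F*(u*) = Σ_s F_s*(u*_s), where F_s*(w) := ⨆_{v ∈ X_s} (⟨v, w⟩ − F_s(v)). -/

import Mathlib

lemma my_iSup_add_iSup {α β : Type*} [Nonempty α] [Nonempty β]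
    (f : α → EReal) (g : β → EReal) :
    (⨆ a, f a) + (⨆ b, g b) = ⨆ p : α × β, f p.1 + g p.2 := by
  apply le_antisymm
  · apply EReal.add_le_of_forall_lt
    intro a' ha' b' hb'
    obtain ⟨a, ha⟩ := lt_iSup_iff.1 ha'
    obtain ⟨b, hb⟩ := lt_iSup_iff.1 hb'
    calc a' + b' ≤ f a + g b := add_le_add ha.le hb.le
    _ ≤ _ := le_iSup (fun p : α × β => f p.1 + g p.2) (a, b)
  · exact iSup_le fun p => add_le_add (le_iSup f p.1) (le_iSup g p.2)

lemma my_sum_iSup {ι : Type*} [DecidableEq ι] (X : ι → Type*) [∀ s, Nonempty (X s)]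
    (f : ∀ s, X s → EReal) (t : Finset ι) :
    ∑ s ∈ t, ⨆ v : X s, f s v = ⨆ u : ∀ s, X s, ∑ s ∈ t, f s (u s) := by
  classical
  induction t using Finset.induction with
  | empty => simp
  | @insert a t ha ih =>
    rw [Finset.sum_insert ha, ih, my_iSup_add_iSup]
    apply le_antisymm
    · refine iSup_le fun p => ?_
      refine le_trans (le_of_eq ?_) (le_iSup _ (Function.update p.2 a p.1))
      rw [Finset.sum_insert ha]
      congr 1
      · rw [Function.update_self]
      · exact Finset.sum_congr rfl fun s hs =>
          by rw [Function.update_of_ne (fun h : s = a => ha (h ▸ hs))]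
    · refine iSup_le fun u => ?_
      rw [Finset.sum_insert ha]
      exact le_iSup (fun p : X a × (∀ s, X s) => f a p.1 + ∑ s ∈ t, f s (p.2 s)) (u a, u)

lemma my_sum_ne_bot {ι : Type*} (g : ι → EReal) (t : Finset ι)
    (h : ∀ s ∈ t, g s ≠ ⊥) : ∑ s ∈ t, g s ≠ ⊥ := by
  classical
  induction t using Finset.induction with
  | empty => simp
  | @insert a t ha ih =>
    rw [Finset.sum_insert ha]
    intro hc
    rcases EReal.add_eq_bot_iff.1 hc with h1 | h1
    · exact h a (Finset.mem_insert_self a t) h1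
    · exact ih (fun s hs => h s (Finset.mem_insert_of_mem hs)) h1

lemma my_neg_sum {ι : Type*} (g : ι → EReal) (t : Finset ι)
    (h : ∀ s ∈ t, g s ≠ ⊥) : -(∑ s ∈ t, g s) = ∑ s ∈ t, -(g s) := by
  classical
  induction t using Finset.induction with
  | empty => simp
  | @insert a t ha ih =>
    rw [Finset.sum_insert ha, Finset.sum_insert ha,
      EReal.neg_add (Or.inl (h a (Finset.mem_insert_self a t)))
        (Or.inr (my_sum_ne_bot g t fun s hs => h s (Finset.mem_insert_of_mem hs))),
      sub_eq_add_neg,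
      ih fun s hs => h s (Finset.mem_insert_of_mem hs)]

/-- the Legendre–Fenchel conjugate of a separable functional is separable:
if `F(u) = Σ_s F_s(u_s)` on `X = Π_s X_s` (with inner product `⟨u,v⟩ = Σ_s ⟨u_s, v_s⟩`),
then `F*(u*) = Σ_s F_s*(u*_s)`. -/
theorem conjugate_of_separable_is_separable {ι : Type*} [Fintype ι] (X : ι → Type*)
    [∀ s, NormedAddCommGroup (X s)] [∀ s, InnerProductSpace ℝ (X s)]
    [∀ s, FiniteDimensional ℝ (X s)]
    (F : ∀ s, X s → EReal)
    (hbot : ∀ s v, F s v ≠ ⊥) (hproper : ∀ s, ∃ v, F s v ≠ ⊤)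
    (ustar : ∀ s, X s) :
    (⨆ u : ∀ s, X s,
        (((∑ s, inner ℝ (u s) (ustar s) : ℝ) : EReal) - ∑ s, F s (u s))) =
      ∑ s, ⨆ v : X s, (((inner ℝ v (ustar s) : ℝ) : EReal) - F s v) := by
  classical
  have key : ∀ u : ∀ s, X s,
      (((∑ s, inner ℝ (u s) (ustar s) : ℝ) : EReal) - ∑ s, F s (u s)) =
      ∑ s, (((inner ℝ (u s) (ustar s) : ℝ) : EReal) - F s (u s)) := by
    intro u
    have hcast : ((∑ s, inner ℝ (u s) (ustar s) : ℝ) : EReal) =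
        ∑ s, ((inner ℝ (u s) (ustar s) : ℝ) : EReal) :=
      map_sum (⟨⟨(fun x : ℝ => (x : EReal)), EReal.coe_zero⟩,
        fun x y => EReal.coe_add x y⟩ : ℝ →+ EReal) _ _
    rw [sub_eq_add_neg, my_neg_sum _ _ (fun s _ => hbot s (u s)), hcast,
      ← Finset.sum_add_distrib]
    exact Finset.sum_congr rfl fun s _ => (sub_eq_add_neg _ _).symm
  simp_rw [key]
  exact (my_sum_iSup X (fun s v => (((inner ℝ v (ustar s) : ℝ) : EReal) - F s v))
    Finset.univ).symm
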